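/- Let B : {1, …, k} → 2^Q be injective and let q₀ ∈ Q be such that the singleton {q₀} is not in the range of B. Define B' : {1, …, k+1} → 2^Q by B'(i) = B(i) for i ∈ {1, …, k} and B'(k+1) = {q₀}. Then |T(n, k, B)| ≤ |T(n, k+1, B')|. -/

import Mathlib

/-!
Common definitions. `Q` is a finite set, `I = {1,…,k}` and `B : I → 2^Q`
(modelled as `B : ℕ → Set Q` used on indices in `{1,…,k}`). For a finite
sequence `α` over `I` (a `List ℕ`): `U(α) = ∪_{i} B(α[i])`,
`Cover(α) = { j ∈ I : B(j) ⊆ U(α) }`, and `Mini(α)` is the set of minimal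
(and least-index among ties) extensions. A Mini-increasing sequence is a
nonempty `α` with `α[i] ∈ Mini(α[1..i−1])` for all positions `i`; these are
exactly the non-root nodes of the increasing tree of sets `T(n,k,B)`.
-/

section
variable {Q : Type}

/-- `U(α) = ∪_{i=1}^{|α|} B(α[i])`. -/
def UB (B : ℕ → Set Q) (α : List ℕ) : Set Q := {q | ∃ j ∈ α, q ∈ B j}

/-- `Cover(α) = { j ∈ I : B(j) ⊆ U(α) }` where `I = {1,…,k}`. -/
def Cover (B : ℕ → Set Q) (k : ℕ) (α : List ℕ) : Set ℕ :=
  {j | 1 ≤ j ∧ j ≤ k ∧ B j ⊆ UB B α}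

/-- `Mini(α)`: the `j ∈ I \ Cover(α)` minimally (and with least index among
ties) extending `U(α)`. -/
def Mini (B : ℕ → Set Q) (k : ℕ) (α : List ℕ) : Set ℕ :=
  {j | (1 ≤ j ∧ j ≤ k ∧ j ∉ Cover B k α) ∧
    ∀ j', 1 ≤ j' → j' ≤ k → j' ∉ Cover B k α →
      (j' ≠ j → ¬ (B j' ∪ UB B α ⊂ B j ∪ UB B α)) ∧
      (j' < j → B j' ∪ UB B α ≠ B j ∪ UB B α)}

/-- A Mini-increasing sequence: nonempty, and each entry belongs to `Mini` of
the preceding prefix (0-indexed). -/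
def MiniIncreasing (B : ℕ → Set Q) (k : ℕ) (α : List ℕ) : Prop :=
  α ≠ [] ∧ ∀ i j, α[i]? = some j → j ∈ Mini B k (α.take i)

end

section AuxForStatement12
variable {Q : Type}

/-- `Mini` as a function of the covered set `U` only. -/
def MiniU (B : ℕ → Set Q) (k : ℕ) (U : Set Q) : Set ℕ :=
  {j | (1 ≤ j ∧ j ≤ k ∧ ¬ (B j ⊆ U)) ∧
    ∀ j', 1 ≤ j' → j' ≤ k → ¬ (B j' ⊆ U) →
      (j' ≠ j → ¬ (B j' ∪ U ⊂ B j ∪ U)) ∧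
      (j' < j → B j' ∪ U ≠ B j ∪ U)}

/-- Recursive version of the Mini-increasing condition. -/
def IncrU (B : ℕ → Set Q) (k : ℕ) : Set Q → List ℕ → Prop
  | _, [] => True
  | U, j :: t => j ∈ MiniU B k U ∧ IncrU B k (U ∪ B j) t

open Classical in
/-- Insert `k+1` at the first place where `q₀` gets covered (if `q₀` is not
covered simultaneously with other points). -/
noncomputable def ginsert (B : ℕ → Set Q) (q₀ : Q) (k : ℕ) : Set Q → List ℕ → List ℕ
  | _, [] => []
  | U, j :: t =>
    if q₀ ∈ B j then
      if B j ⊆ U ∪ {q₀} then j :: t else (k+1) :: j :: t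
    else j :: ginsert B q₀ k (U ∪ B j) t

lemma ub_nil (B : ℕ → Set Q) : UB B [] = ∅ := by ext q; simp [UB]

lemma ub_cons (B : ℕ → Set Q) (j : ℕ) (t : List ℕ) :
    UB B (j :: t) = B j ∪ UB B t := by
  ext q; simp [UB, List.mem_cons, or_and_right, exists_or]

lemma mini_eq_miniU (B : ℕ → Set Q) (k : ℕ) (α : List ℕ) :
    Mini B k α = MiniU B k (UB B α) := by
  have hcov : ∀ j, 1 ≤ j → j ≤ k → (j ∉ Cover B k α ↔ ¬ B j ⊆ UB B α) := by
    intro j h1 h2; simp [Cover, h1, h2]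
  ext j
  constructor
  · rintro ⟨⟨h1, h2, h3⟩, h4⟩
    exact ⟨⟨h1, h2, (hcov j h1 h2).1 h3⟩,
      fun j' a b c => h4 j' a b ((hcov j' a b).2 c)⟩
  · rintro ⟨⟨h1, h2, h3⟩, h4⟩
    exact ⟨⟨h1, h2, (hcov j h1 h2).2 h3⟩,
      fun j' a b c => h4 j' a b ((hcov j' a b).1 c)⟩

lemma incr_iff (B : ℕ → Set Q) (k : ℕ) :
    ∀ (α : List ℕ) (U : Set Q), IncrU B k U α ↔
      ∀ i j, α[i]? = some j → j ∈ MiniU B k (U ∪ UB B (α.take i))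
  | [], U => by simp [IncrU]
  | a :: t, U => by
    simp only [IncrU]
    constructor
    · rintro ⟨ha, ht⟩ i j hj
      match i with
      | 0 =>
        simp only [List.getElem?_cons_zero, Option.some.injEq] at hj
        subst hj
        simpa [ub_nil] using ha
      | i + 1 =>
        simp only [List.getElem?_cons_succ] at hj
        have := (incr_iff B k t (U ∪ B a)).1 ht i j hj
        simpa [List.take_succ_cons, ub_cons, Set.union_assoc] using this
    · intro h
      refine ⟨by simpa [ub_nil] using h 0 a (by simp), (incr_iff B k t (U ∪ B a)).2 ?_⟩
      intro i j hj
      have := h (i + 1) j (by simpa using hj)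
      simpa [List.take_succ_cons, ub_cons, Set.union_assoc] using this

lemma miniIncreasing_iff_incrU (B : ℕ → Set Q) (k : ℕ) (α : List ℕ) :
    MiniIncreasing B k α ↔ α ≠ [] ∧ IncrU B k ∅ α := by
  unfold MiniIncreasing
  rw [incr_iff]
  refine and_congr_right fun _ => forall_congr' fun i => forall_congr' fun j =>
    imp_congr_right fun _ => ?_
  rw [mini_eq_miniU, Set.empty_union]

lemma entries_bound {B : ℕ → Set Q} {k : ℕ} :
    ∀ {t : List ℕ} {U : Set Q}, IncrU B k U t → ∀ j ∈ t, 1 ≤ j ∧ j ≤ k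
  | [], _, _, j, hj => absurd hj List.not_mem_nil
  | a :: t, U, ⟨ha, ht⟩, j, hj => by
    rcases List.mem_cons.1 hj with rfl | hj
    · exact ⟨ha.1.1, ha.1.2.1⟩
    · exact entries_bound ht j hj

lemma len_bound [Fintype Q] {B : ℕ → Set Q} {k : ℕ} :
    ∀ (t : List ℕ) (U : Set Q), IncrU B k U t →
      t.length + U.ncard ≤ Fintype.card Q
  | [], U, _ => by
    simpa [Set.ncard_univ] using Set.ncard_le_ncard (Set.subset_univ U) Set.finite_univ
  | a :: t, U, ⟨ha, ht⟩ => by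
    obtain ⟨x, hxB, hxU⟩ := Set.not_subset.1 ha.1.2.2
    have h1 : (insert x U).ncard = U.ncard + 1 :=
      Set.ncard_insert_of_notMem hxU U.toFinite
    have h2 : (insert x U).ncard ≤ (U ∪ B a).ncard :=
      Set.ncard_le_ncard (Set.insert_subset (Or.inr hxB) Set.subset_union_left)
        (U ∪ B a).toFinite
    have h3 := len_bound t (U ∪ B a) ht
    simp only [List.length_cons]
    omega

lemma ginsert_ne_nil {B : ℕ → Set Q} {q₀ : Q} {k : ℕ} {U : Set Q} {t : List ℕ}
    (h : t ≠ []) : ginsert B q₀ k U t ≠ [] := by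
  match t with
  | [] => exact absurd rfl h
  | a :: t =>
    simp only [ginsert]
    split_ifs <;> simp

lemma ginsert_erase {B : ℕ → Set Q} {q₀ : Q} {k : ℕ} :
    ∀ (t : List ℕ) (U : Set Q), (∀ j ∈ t, j ≠ k + 1) →
      (ginsert B q₀ k U t).erase (k + 1) = t
  | [], U, _ => by simp [ginsert]
  | a :: t, U, h => by
    have ha : a ≠ k + 1 := h a List.mem_cons_self
    simp only [ginsert]
    split_ifs with h1 h2
    · exact List.erase_of_not_mem (by intro hc; exact (h _ hc) rfl)
    · exact List.erase_cons_head _ _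
    · rw [List.erase_cons_tail (by simpa using ha)]
      rw [ginsert_erase t (U ∪ B a) (fun j hj => h j (List.mem_cons_of_mem a hj))]

section Transfer
variable {B B' : ℕ → Set Q} {k : ℕ} {q₀ : Q}
variable (hext : ∀ j, 1 ≤ j → j ≤ k → B' j = B j) (hnew : B' (k + 1) = {q₀})

include hext hnew

/-- Transfer when `q₀` is already covered: the new index `k+1` is covered so
it does not compete. -/
lemma miniU_transfer_mem {U : Set Q} {j : ℕ} (hq : q₀ ∈ U)
    (hj : j ∈ MiniU B k U) : j ∈ MiniU B' (k + 1) U := by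
  obtain ⟨⟨h1, h2, h3⟩, h4⟩ := hj
  refine ⟨⟨h1, h2.trans (Nat.le_succ k), by rw [hext j h1 h2]; exact h3⟩, ?_⟩
  intro j' a b c
  rcases Nat.lt_or_ge j' (k + 1) with hb | hb
  · have hb' : j' ≤ k := Nat.lt_succ_iff.mp hb
    rw [hext j' a hb'] at c ⊢
    rw [hext j h1 h2]
    exact h4 j' a hb' c
  · have : j' = k + 1 := le_antisymm b hb
    subst this
    rw [hnew] at c
    exact absurd (by simpa using hq) c

/-- Transfer when `{q₀} ∪ U` is not a strict subset of `B j ∪ U`. -/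
lemma miniU_transfer_nostrict {U : Set Q} {j : ℕ}
    (hq : ¬ ({q₀} ∪ U ⊂ B j ∪ U))
    (hj : j ∈ MiniU B k U) : j ∈ MiniU B' (k + 1) U := by
  obtain ⟨⟨h1, h2, h3⟩, h4⟩ := hj
  refine ⟨⟨h1, h2.trans (Nat.le_succ k), by rw [hext j h1 h2]; exact h3⟩, ?_⟩
  intro j' a b c
  rcases Nat.lt_or_ge j' (k + 1) with hb | hb
  · have hb' : j' ≤ k := Nat.lt_succ_iff.mp hb
    rw [hext j' a hb'] at c ⊢
    rw [hext j h1 h2]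
    exact h4 j' a hb' c
  · have : j' = k + 1 := le_antisymm b hb
    subst this
    rw [hext j h1 h2, hnew]
    exact ⟨fun _ => hq, fun hlt => absurd hlt (by omega)⟩

/-- The new index is Mini when `q₀ ∉ U`, `q₀ ∈ B j`, and `B j` covers more
than `{q₀}`, given `j` was Mini for `B`. -/
lemma new_mem_mini {U : Set Q} {j : ℕ} (hqU : q₀ ∉ U) (hmem : q₀ ∈ B j)
    (hns : ¬ B j ⊆ U ∪ {q₀}) (hj : j ∈ MiniU B k U) :
    (k + 1) ∈ MiniU B' (k + 1) U := by
  obtain ⟨⟨h1, h2, _⟩, h4⟩ := hj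
  refine ⟨⟨by omega, le_rfl, by rw [hnew]; simpa using hqU⟩, ?_⟩
  intro j' a b c
  rw [hnew]
  constructor
  · intro hne hss
    have hb' : j' ≤ k := by omega
    rw [hext j' a hb'] at c hss
    have hq' : q₀ ∉ B j' := by
      intro hmem'
      exact hss.2 (Set.union_subset (by simpa using Or.inl hmem') Set.subset_union_right)
    apply c
    intro x hx
    rcases hss.1 (Or.inl hx) with h | h
    · exact absurd (h ▸ hx) hq'
    · exact h
  · intro hlt heq
    have hb' : j' ≤ k := by omega
    rw [hext j' a hb'] at c heq
    have hne' : j' ≠ j := by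
      intro h; subst h
      apply hns
      intro x hx
      have hx' : x ∈ ({q₀} : Set Q) ∪ U := by rw [← heq]; exact Or.inl hx
      rcases hx' with h | h
      · exact Or.inr h
      · exact Or.inl h
    obtain ⟨x, hxB, hxU⟩ := Set.not_subset.1 hns
    refine (h4 j' a hb' c).1 hne' ⟨?_, ?_⟩
    · rw [heq]
      exact Set.union_subset (by simpa using Or.inl hmem) Set.subset_union_right
    · intro hsub
      have hx' := hsub (Or.inl hxB)
      rw [heq] at hx'
      rcases hx' with h | h
      · exact hxU (Or.inr h)
      · exact hxU (Or.inl h)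

/-- After inserting `k+1`, the old head is still Mini w.r.t. `U ∪ {q₀}`. -/
lemma head_mem_mini {U : Set Q} {j : ℕ} (hmem : q₀ ∈ B j)
    (hns : ¬ B j ⊆ U ∪ {q₀}) (hj : j ∈ MiniU B k U) :
    j ∈ MiniU B' (k + 1) (U ∪ {q₀}) := by
  obtain ⟨⟨h1, h2, _⟩, h4⟩ := hj
  have eqBj : B j ∪ (U ∪ {q₀}) = B j ∪ U := by
    ext x
    constructor
    · rintro (h | h | h)
      · exact Or.inl h
      · exact Or.inr h
      · exact Or.inl (by simpa using h ▸ hmem)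
    · rintro (h | h)
      · exact Or.inl h
      · exact Or.inr (Or.inl h)
  refine ⟨⟨h1, h2.trans (Nat.le_succ k), by rw [hext j h1 h2]; exact hns⟩, ?_⟩
  intro j' a b c
  rcases Nat.lt_or_ge j' (k + 1) with hb | hb
  · have hb' : j' ≤ k := Nat.lt_succ_iff.mp hb
    rw [hext j' a hb'] at c ⊢
    rw [hext j h1 h2]
    have c' : ¬ B j' ⊆ U := fun h => c (h.trans Set.subset_union_left)
    constructor
    · intro hne hss
      rw [eqBj] at hss
      have h1' : B j' ∪ U ⊆ B j ∪ U :=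
        (Set.union_subset_union_right _ Set.subset_union_left).trans hss.1
      rcases h1'.ssubset_or_eq with h | h
      · exact (h4 j' a hb' c').1 (fun e => ssubset_irrefl _ (e ▸ h)) h
      · have heq2 : B j' ∪ (U ∪ {q₀}) = B j ∪ U := by
          rw [← Set.union_assoc, h, Set.union_assoc, eqBj]
        rw [heq2] at hss
        exact ssubset_irrefl _ hss
    · intro hlt heq
      rw [eqBj] at heq
      have h1' : B j' ∪ U ⊆ B j ∪ U :=
        (Set.union_subset_union_right _ Set.subset_union_left).trans heq.subset
      have c'' := h4 j' a hb' c'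
      rcases h1'.ssubset_or_eq with h | h
      · exact (c''.1 (ne_of_lt hlt) h)
      · exact (c''.2 hlt h)
  · have : j' = k + 1 := le_antisymm b hb
    subst this
    rw [hnew] at c
    exact absurd (by simp) c

lemma incr_transfer : ∀ (t : List ℕ) (U : Set Q), q₀ ∈ U →
    IncrU B k U t → IncrU B' (k + 1) U t
  | [], _, _, _ => trivial
  | a :: t, U, hq, ⟨ha, ht⟩ => by
    refine ⟨miniU_transfer_mem hext hnew hq ha, ?_⟩
    rw [hext a ha.1.1 ha.1.2.1]
    exact incr_transfer t (U ∪ B a) (Or.inl hq) ht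

lemma incr_ginsert : ∀ (t : List ℕ) (U : Set Q), q₀ ∉ U →
    IncrU B k U t → IncrU B' (k + 1) U (ginsert B q₀ k U t)
  | [], _, _, _ => by simpa [ginsert, IncrU] using trivial
  | a :: t, U, hqU, ⟨ha, ht⟩ => by
    have h1 := ha.1.1
    have h2 := ha.1.2.1
    simp only [ginsert]
    split_ifs with hmem hsub
    · have heq : B a ∪ U = {q₀} ∪ U := by
        apply Set.Subset.antisymm
        · rintro x (hx | hx)
          · rcases hsub hx with h | h
            · exact Or.inr h
            · exact Or.inl h
          · exact Or.inr hx
        · rintro x (hx | hx)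
          · exact Or.inl (by simpa using hx ▸ hmem)
          · exact Or.inr hx
      refine ⟨miniU_transfer_nostrict hext hnew (by rw [heq]; exact ssubset_irrefl _) ha, ?_⟩
      rw [hext a h1 h2]
      exact incr_transfer hext hnew t (U ∪ B a) (Or.inr hmem) ht
    · refine ⟨new_mem_mini hext hnew hqU hmem hsub ha, ?_⟩
      rw [hnew]
      refine ⟨head_mem_mini hext hnew hmem hsub ha, ?_⟩
      rw [hext a h1 h2]
      have hU : U ∪ {q₀} ∪ B a = U ∪ B a := by
        ext x
        constructor
        · rintro ((h | h) | h)
          · exact Or.inl h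
          · exact Or.inr (by simpa using h ▸ hmem)
          · exact Or.inr h
        · rintro (h | h)
          · exact Or.inl (Or.inl h)
          · exact Or.inr h
      rw [hU]
      exact incr_transfer hext hnew t (U ∪ B a) (Or.inr hmem) ht
    · have hq' : ¬ ({q₀} ∪ U ⊂ B a ∪ U) := by
        intro hss
        rcases hss.1 (Or.inl rfl) with h | h
        · exact hmem h
        · exact hqU h
      refine ⟨miniU_transfer_nostrict hext hnew hq' ha, ?_⟩
      rw [hext a h1 h2]
      exact incr_ginsert t (U ∪ B a) (by rintro (h | h); exacts [hqU h, hmem h]) ht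

end Transfer
end AuxForStatement12

/-!
STATEMENT 12: Let B : {1, …, k} → 2^Q be injective and let q₀ ∈ Q be such
that the singleton {q₀} is not in the range of B. Define
B' : {1, …, k+1} → 2^Q by B'(i) = B(i) for i ∈ {1, …, k} and B'(k+1) = {q₀}.
Then |T(n, k, B)| ≤ |T(n, k+1, B')|.
-/

theorem miniIncreasing_count_add_singleton
    {Q : Type} [Fintype Q] (n k : ℕ) (hn : 1 ≤ n) (hk : 1 ≤ k)
    (hcard : Fintype.card Q = n) (B B' : ℕ → Set Q) (q₀ : Q)
    (hinjB : Set.InjOn B (Set.Icc 1 k))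
    (hq₀ : ∀ j, 1 ≤ j → j ≤ k → B j ≠ {q₀})
    (hext : ∀ j, 1 ≤ j → j ≤ k → B' j = B j)
    (hnew : B' (k + 1) = {q₀}) :
    {α : List ℕ | MiniIncreasing B k α}.ncard
      ≤ {α : List ℕ | MiniIncreasing B' (k + 1) α}.ncard := by
  classical
  have hTfin : {α : List ℕ | MiniIncreasing B' (k + 1) α}.Finite := by
    have hsub : {α : List ℕ | MiniIncreasing B' (k + 1) α} ⊆
        (List.map (Fin.val : Fin (k+2) → ℕ)) '' {l : List (Fin (k+2)) | l.length ≤ n} := by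
      intro α hα
      rw [Set.mem_setOf_eq, miniIncreasing_iff_incrU] at hα
      obtain ⟨-, hinc⟩ := hα
      have hen : ∀ j ∈ α, j < k + 2 := fun j hj => by
        have := entries_bound hinc j hj; omega
      refine ⟨α.pmap (fun x h => (⟨x, h⟩ : Fin (k+2))) hen, ?_, ?_⟩
      · show List.length _ ≤ n
        rw [List.length_pmap]
        have := len_bound α ∅ hinc
        simpa [hcard] using this
      · simp [List.map_pmap]
    exact ((List.finite_length_le (Fin (k+2)) n).image _).subset hsub
  refine Set.ncard_le_ncard_of_injOn (fun α => ginsert B q₀ k ∅ α) ?_ ?_ hTfin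
  · intro α hα
    rw [Set.mem_setOf_eq, miniIncreasing_iff_incrU] at hα ⊢
    exact ⟨ginsert_ne_nil hα.1, incr_ginsert hext hnew α ∅ (by simp) hα.2⟩
  · intro α₁ h₁ α₂ h₂ heq
    rw [Set.mem_setOf_eq, miniIncreasing_iff_incrU] at h₁ h₂
    have hne : ∀ (α : List ℕ), IncrU B k ∅ α → ∀ j ∈ α, j ≠ k + 1 := by
      intro α hinc j hj
      have := entries_bound hinc j hj; omega
    have e1 := ginsert_erase (B := B) (q₀ := q₀) α₁ ∅ (hne α₁ h₁.2)
    have e2 := ginsert_erase (B := B) (q₀ := q₀) α₂ ∅ (hne α₂ h₂.2)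
    rw [← e1, ← e2]
    simp only at heq
    rw [heq]
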